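/- For any m ∈ ℕ and any weights α_{1,j}, α_{2,j} ≥ 0 (j = 1,…,m), the set Λ₀ is a closed and discrete subset of ℝ². -/

import Mathlib

/-- The subset `Γ_{α₁,α₂}` of an ellipse in `ℝ²`. -/
def GammaSet (a1 a2 : ℝ) : Set (ℝ × ℝ) :=
  {s | 0 ≤ s.1 ∧ 0 ≤ s.2 ∧
    s.1 ^ 2 - s.1 * s.2 + s.2 ^ 2 = 2 * (1 + a1) * s.1 + 2 * (1 + a2) * s.2}

namespace LZaux

variable (a1 a2 : ℝ)

noncomputable def bigM : ℝ := 4 * (2 * (1 + a1) + 2 * (1 + a2))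

lemma coord_le (h1 : 0 ≤ a1) (h2 : 0 ≤ a2) {p : ℝ × ℝ} (hp : p ∈ GammaSet a1 a2) :
    p.1 ≤ bigM a1 a2 ∧ p.2 ≤ bigM a1 a2 := by
  obtain ⟨hx, hy, he⟩ := hp
  have hsum : p.1 + p.2 ≤ bigM a1 a2 := by
    unfold bigM
    nlinarith [sq_nonneg (p.1 - p.2), sq_nonneg (p.1 + p.2), mul_nonneg hx hy]
  constructor <;> linarith

open Classical in
/-- rank of a point on the ellipse -/
noncomputable def rank (p : ℝ × ℝ) : ℕ :=
  (if p.1 + 2 * (1 + a2) ≤ 2 * p.2 then 0 else 1) +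
  (if p.2 + 2 * (1 + a1) ≤ 2 * p.1 then 0 else 1) +
  (if 2 * (1 + a2) + 2 * (1 + a1) ≤ p.1 + p.2 then 0 else 1)

lemma rank_le_three (p : ℝ × ℝ) : rank a1 a2 p ≤ 3 := by
  unfold rank; split_ifs <;> omega

lemma rank_lt_vert {a b d : ℝ} (hp : (a, b) ∈ GammaSet a1 a2)
    (hq : (a, d) ∈ GammaSet a1 a2) (hbd : b < d) :
    rank a1 a2 (a, d) < rank a1 a2 (a, b) := by
  obtain ⟨-, -, e1⟩ := hp
  obtain ⟨-, -, e2⟩ := hq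
  simp only at e1 e2
  have hsum : b + d = a + 2 * (1 + a2) := by
    have hfac : (b - d) * (b + d - (a + 2 * (1 + a2))) = 0 := by linear_combination e1 - e2
    rcases mul_eq_zero.mp hfac with h | h
    · exact absurd h (by intro hh; linarith)
    · linarith
  unfold rank
  dsimp only
  split_ifs <;> first | omega | linarith

lemma rank_lt_horiz {a b c : ℝ} (hp : (a, b) ∈ GammaSet a1 a2)
    (hq : (c, b) ∈ GammaSet a1 a2) (hac : a < c) :
    rank a1 a2 (c, b) < rank a1 a2 (a, b) := by
  obtain ⟨-, -, e1⟩ := hp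
  obtain ⟨-, -, e2⟩ := hq
  simp only at e1 e2
  have hsum : a + c = b + 2 * (1 + a1) := by
    have hfac : (a - c) * (a + c - (b + 2 * (1 + a1))) = 0 := by linear_combination e1 - e2
    rcases mul_eq_zero.mp hfac with h | h
    · exact absurd h (by intro hh; linarith)
    · linarith
  unfold rank
  dsimp only
  split_ifs <;> first | omega | linarith

noncomputable def mu (p : ℝ × ℝ) : ℕ :=
  4 * (⌊(bigM a1 a2 - p.1) / 2⌋₊ + ⌊(bigM a1 a2 - p.2) / 2⌋₊) + rank a1 a2 p

lemma mu_le (h1 : 0 ≤ a1) (h2 : 0 ≤ a2) {p : ℝ × ℝ} (hp : p ∈ GammaSet a1 a2) :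
    mu a1 a2 p ≤ 4 * (⌊bigM a1 a2 / 2⌋₊ + ⌊bigM a1 a2 / 2⌋₊) + 3 := by
  have hx := hp.1
  have hy := hp.2.1
  have f1 : ⌊(bigM a1 a2 - p.1) / 2⌋₊ ≤ ⌊bigM a1 a2 / 2⌋₊ :=
    Nat.floor_le_floor (by linarith)
  have f2 : ⌊(bigM a1 a2 - p.2) / 2⌋₊ ≤ ⌊bigM a1 a2 / 2⌋₊ :=
    Nat.floor_le_floor (by linarith)
  have := rank_le_three a1 a2 p
  unfold mu; omega

lemma mu_lt_rule2 (h1 : 0 ≤ a1) (h2 : 0 ≤ a2) {a b c d : ℝ} {m : ℕ}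
    (hp : (a, b) ∈ GammaSet a1 a2) (hq : (c, d) ∈ GammaSet a1 a2)
    (hc : c = a + 2 * m) (hbd : b ≤ d) (hne : (c, d) ≠ (a, b)) :
    mu a1 a2 (c, d) < mu a1 a2 (a, b) := by
  have hyfloor : ⌊(bigM a1 a2 - d) / 2⌋₊ ≤ ⌊(bigM a1 a2 - b) / 2⌋₊ :=
    Nat.floor_le_floor (by linarith)
  rcases Nat.eq_zero_or_pos m with hm | hm
  · subst hm
    have hca : c = a := by rw [hc]; push_cast; ring
    subst hca
    have hd : b < d := by
      rcases lt_or_eq_of_le hbd with h | h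
      · exact h
      · exact absurd (by rw [h]) hne
    have hr := rank_lt_vert a1 a2 hp hq hd
    unfold mu; dsimp only; omega
  · have hcM : c ≤ bigM a1 a2 := (coord_le a1 a2 h1 h2 hq).1
    have hmle : (m : ℝ) ≤ (bigM a1 a2 - a) / 2 := by
      have : (0:ℝ) ≤ a := hp.1
      rw [hc] at hcM; linarith
    have hfl : ⌊(bigM a1 a2 - c) / 2⌋₊ = ⌊(bigM a1 a2 - a) / 2⌋₊ - m := by
      rw [hc, show (bigM a1 a2 - (a + 2 * (m:ℝ))) / 2 = (bigM a1 a2 - a) / 2 - (m:ℕ) by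
        push_cast; ring]
      exact Nat.floor_sub_natCast _ _
    have hge : m ≤ ⌊(bigM a1 a2 - a) / 2⌋₊ := Nat.le_floor hmle
    have hr1 := rank_le_three a1 a2 (c, d)
    unfold mu; dsimp only; omega

lemma mu_lt_rule3 (h1 : 0 ≤ a1) (h2 : 0 ≤ a2) {a b c d : ℝ} {n : ℕ}
    (hp : (a, b) ∈ GammaSet a1 a2) (hq : (c, d) ∈ GammaSet a1 a2)
    (hd : d = b + 2 * n) (hac : a ≤ c) (hne : (c, d) ≠ (a, b)) :
    mu a1 a2 (c, d) < mu a1 a2 (a, b) := by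
  have hxfloor : ⌊(bigM a1 a2 - c) / 2⌋₊ ≤ ⌊(bigM a1 a2 - a) / 2⌋₊ :=
    Nat.floor_le_floor (by linarith)
  rcases Nat.eq_zero_or_pos n with hn | hn
  · subst hn
    have hdb : d = b := by rw [hd]; push_cast; ring
    subst hdb
    have hc : a < c := by
      rcases lt_or_eq_of_le hac with h | h
      · exact h
      · exact absurd (by rw [h]) hne
    have hr := rank_lt_horiz a1 a2 hp hq hc
    unfold mu; dsimp only; omega
  · have hdM : d ≤ bigM a1 a2 := (coord_le a1 a2 h1 h2 hq).2
    have hnle : (n : ℝ) ≤ (bigM a1 a2 - b) / 2 := by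
      have : (0:ℝ) ≤ b := hp.2.1
      rw [hd] at hdM; linarith
    have hfl : ⌊(bigM a1 a2 - d) / 2⌋₊ = ⌊(bigM a1 a2 - b) / 2⌋₊ - n := by
      rw [hd, show (bigM a1 a2 - (b + 2 * (n:ℝ))) / 2 = (bigM a1 a2 - b) / 2 - (n:ℕ) by
        push_cast; ring]
      exact Nat.floor_sub_natCast _ _
    have hge : n ≤ ⌊(bigM a1 a2 - b) / 2⌋₊ := Nat.le_floor hnle
    have hr1 := rank_le_three a1 a2 (c, d)
    unfold mu; dsimp only; omega

end LZaux

namespace LZaux2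
open LZaux

variable (a1 a2 : ℝ)

lemma sliceX_fin (c : ℝ) : {q : ℝ × ℝ | q ∈ GammaSet a1 a2 ∧ q.1 = c}.Finite := by
  set s : ℝ := c + 2 * (1 + a2) with hs
  set t : ℝ := c ^ 2 - 2 * (1 + a1) * c with ht
  set r : ℝ := Real.sqrt (s ^ 2 - 4 * t) with hr
  apply Set.Finite.subset ((Set.finite_singleton (c, (s - r) / 2)).insert (c, (s + r) / 2))
  rintro ⟨x, y⟩ ⟨⟨hx, hy, he⟩, hxc⟩
  simp only at he hxc
  subst hxc
  have key : y ^ 2 - s * y + t = 0 := by rw [hs, ht]; linear_combination he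
  have hD : 0 ≤ s ^ 2 - 4 * t := by nlinarith [sq_nonneg (2 * y - s)]
  have hr2 : r ^ 2 = s ^ 2 - 4 * t := Real.sq_sqrt hD
  have hfac : (2 * y - s - r) * (2 * y - s + r) = 0 := by linear_combination 4 * key - hr2
  rcases mul_eq_zero.mp hfac with h | h
  · have : y = (s + r) / 2 := by linarith
    exact Set.mem_insert_iff.mpr (Or.inl (by rw [this]))
  · have : y = (s - r) / 2 := by linarith
    exact Set.mem_insert_iff.mpr (Or.inr (by rw [this]; rfl))

lemma sliceY_fin (d : ℝ) : {q : ℝ × ℝ | q ∈ GammaSet a1 a2 ∧ q.2 = d}.Finite := by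
  set s : ℝ := d + 2 * (1 + a1) with hs
  set t : ℝ := d ^ 2 - 2 * (1 + a2) * d with ht
  set r : ℝ := Real.sqrt (s ^ 2 - 4 * t) with hr
  apply Set.Finite.subset ((Set.finite_singleton ((s - r) / 2, d)).insert ((s + r) / 2, d))
  rintro ⟨x, y⟩ ⟨⟨hx, hy, he⟩, hyd⟩
  simp only at he hyd
  subst hyd
  have key : x ^ 2 - s * x + t = 0 := by rw [hs, ht]; linear_combination he
  have hD : 0 ≤ s ^ 2 - 4 * t := by nlinarith [sq_nonneg (2 * x - s)]
  have hr2 : r ^ 2 = s ^ 2 - 4 * t := Real.sq_sqrt hD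
  have hfac : (2 * x - s - r) * (2 * x - s + r) = 0 := by linear_combination 4 * key - hr2
  rcases mul_eq_zero.mp hfac with h | h
  · have : x = (s + r) / 2 := by linarith
    exact Set.mem_insert_iff.mpr (Or.inl (by rw [this]))
  · have : x = (s - r) / 2 := by linarith
    exact Set.mem_insert_iff.mpr (Or.inr (by rw [this]; rfl))

lemma shiftX_fin (h1 : 0 ≤ a1) (h2 : 0 ≤ a2) {x0 : ℝ} (hx0 : 0 ≤ x0) :
    {q : ℝ × ℝ | q ∈ GammaSet a1 a2 ∧ ∃ m : ℕ, q.1 = x0 + 2 * m}.Finite := by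
  have : {q : ℝ × ℝ | q ∈ GammaSet a1 a2 ∧ ∃ m : ℕ, q.1 = x0 + 2 * m} ⊆
      ⋃ m ∈ Finset.range (⌊bigM a1 a2 / 2⌋₊ + 1),
        {q : ℝ × ℝ | q ∈ GammaSet a1 a2 ∧ q.1 = x0 + 2 * m} := by
    rintro q ⟨hq, m, hm⟩
    have hqM : q.1 ≤ bigM a1 a2 := (coord_le a1 a2 h1 h2 hq).1
    have : (m : ℝ) ≤ bigM a1 a2 / 2 := by rw [hm] at hqM; linarith
    have hmlt : m < ⌊bigM a1 a2 / 2⌋₊ + 1 := Nat.lt_succ_of_le (Nat.le_floor this)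
    exact Set.mem_biUnion (Finset.mem_range.mpr hmlt) ⟨hq, hm⟩
  exact Set.Finite.subset
    (Set.Finite.biUnion (Finset.range _).finite_toSet fun m _ => sliceX_fin a1 a2 _) this

lemma shiftY_fin (h1 : 0 ≤ a1) (h2 : 0 ≤ a2) {y0 : ℝ} (hy0 : 0 ≤ y0) :
    {q : ℝ × ℝ | q ∈ GammaSet a1 a2 ∧ ∃ n : ℕ, q.2 = y0 + 2 * n}.Finite := by
  have : {q : ℝ × ℝ | q ∈ GammaSet a1 a2 ∧ ∃ n : ℕ, q.2 = y0 + 2 * n} ⊆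
      ⋃ n ∈ Finset.range (⌊bigM a1 a2 / 2⌋₊ + 1),
        {q : ℝ × ℝ | q ∈ GammaSet a1 a2 ∧ q.2 = y0 + 2 * n} := by
    rintro q ⟨hq, n, hn⟩
    have hqM : q.2 ≤ bigM a1 a2 := (coord_le a1 a2 h1 h2 hq).2
    have : (n : ℝ) ≤ bigM a1 a2 / 2 := by rw [hn] at hqM; linarith
    have hnlt : n < ⌊bigM a1 a2 / 2⌋₊ + 1 := Nat.lt_succ_of_le (Nat.le_floor this)
    exact Set.mem_biUnion (Finset.mem_range.mpr hnlt) ⟨hq, hn⟩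
  exact Set.Finite.subset
    (Set.Finite.biUnion (Finset.range _).finite_toSet fun n _ => sliceY_fin a1 a2 _) this

end LZaux2


/-- Membership in `Λ_{α₁,α₂}`: the smallest subset of `Γ_{α₁,α₂}` containing the six
distinguished points and closed under the two horizontal/vertical propagation rules. -/
inductive LambdaMem (a1 a2 : ℝ) : ℝ × ℝ → Prop
  | pt₀ : LambdaMem a1 a2 (0, 0)
  | pt₁ : LambdaMem a1 a2 (2 * (1 + a1), 0)
  | pt₂ : LambdaMem a1 a2 (0, 2 * (1 + a2))
  | pt₃ : LambdaMem a1 a2 (2 * (1 + a1), 2 * (2 + a1 + a2))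
  | pt₄ : LambdaMem a1 a2 (2 * (2 + a1 + a2), 2 * (1 + a2))
  | pt₅ : LambdaMem a1 a2 (2 * (2 + a1 + a2), 2 * (2 + a1 + a2))
  | rule₂ (a b c d : ℝ) (m : ℕ) : LambdaMem a1 a2 (a, b) → (c, d) ∈ GammaSet a1 a2 →
      c = a + 2 * m → b ≤ d → LambdaMem a1 a2 (c, d)
  | rule₃ (a b c d : ℝ) (n : ℕ) : LambdaMem a1 a2 (a, b) → (c, d) ∈ GammaSet a1 a2 →
      d = b + 2 * n → a ≤ c → LambdaMem a1 a2 (c, d)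

/-- The set `Λ_{α₁,α₂}`. -/
def LambdaSet (a1 a2 : ℝ) : Set (ℝ × ℝ) := {p | LambdaMem a1 a2 p}

namespace LZfin
open LZaux LZaux2

variable {a1 a2 : ℝ}

def Bset (a1 a2 : ℝ) : Set (ℝ × ℝ) :=
  {(0, 0), (2 * (1 + a1), 0), (0, 2 * (1 + a2)), (2 * (1 + a1), 2 * (2 + a1 + a2)),
    (2 * (2 + a1 + a2), 2 * (1 + a2)), (2 * (2 + a1 + a2), 2 * (2 + a1 + a2))}

lemma Bset_finite : (Bset a1 a2).Finite := by
  unfold Bset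
  exact Set.Finite.insert _ (Set.Finite.insert _ (Set.Finite.insert _ (Set.Finite.insert _
    (Set.Finite.insert _ (Set.finite_singleton _)))))

lemma mem_gamma (h1 : 0 ≤ a1) (h2 : 0 ≤ a2) {p : ℝ × ℝ} (hp : LambdaMem a1 a2 p) :
    p ∈ GammaSet a1 a2 := by
  induction hp with
  | pt₀ => exact ⟨le_refl 0, le_refl 0, by ring⟩
  | pt₁ => exact ⟨by dsimp only; linarith, le_refl 0, by ring⟩
  | pt₂ => exact ⟨le_refl 0, by dsimp only; linarith, by ring⟩
  | pt₃ => exact ⟨by dsimp only; linarith, by dsimp only; linarith, by ring⟩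
  | pt₄ => exact ⟨by dsimp only; linarith, by dsimp only; linarith, by ring⟩
  | pt₅ => exact ⟨by dsimp only; linarith, by dsimp only; linarith, by ring⟩
  | rule₂ a b c d m hmem hq hc hbd ih => exact hq
  | rule₃ a b c d n hmem hq hd hac ih => exact hq

lemma struct (h1 : 0 ≤ a1) (h2 : 0 ≤ a2) {p : ℝ × ℝ} (hp : LambdaMem a1 a2 p) :
    p ∈ Bset a1 a2 ∨ ∃ r, LambdaMem a1 a2 r ∧ mu a1 a2 p < mu a1 a2 r ∧
      (p ∈ GammaSet a1 a2 ∧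
        ((∃ m : ℕ, p.1 = r.1 + 2 * m) ∨ (∃ n : ℕ, p.2 = r.2 + 2 * n))) := by
  induction hp with
  | pt₀ => left; simp [Bset]
  | pt₁ => left; simp [Bset]
  | pt₂ => left; simp [Bset]
  | pt₃ => left; simp [Bset]
  | pt₄ => left; simp [Bset]
  | pt₅ => left; simp [Bset]
  | rule₂ a b c d m hmem hq hc hbd ih =>
    by_cases hne : ((c, d) : ℝ × ℝ) = (a, b)
    · rw [hne]; exact ih
    · exact Or.inr ⟨(a, b), hmem,
        mu_lt_rule2 a1 a2 h1 h2 (mem_gamma h1 h2 hmem) hq hc hbd hne, hq, Or.inl ⟨m, hc⟩⟩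
  | rule₃ a b c d n hmem hq hd hac ih =>
    by_cases hne : ((c, d) : ℝ × ℝ) = (a, b)
    · rw [hne]; exact ih
    · exact Or.inr ⟨(a, b), hmem,
        mu_lt_rule3 a1 a2 h1 h2 (mem_gamma h1 h2 hmem) hq hd hac hne, hq, Or.inr ⟨n, hd⟩⟩

lemma lambdaSet_finite (h1 : 0 ≤ a1) (h2 : 0 ≤ a2) : (LambdaSet a1 a2).Finite := by
  set N := 4 * (⌊bigM a1 a2 / 2⌋₊ + ⌊bigM a1 a2 / 2⌋₊) + 3 with hN
  have key : ∀ k, {p : ℝ × ℝ | LambdaMem a1 a2 p ∧ N ≤ mu a1 a2 p + k}.Finite := by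
    intro k
    induction k with
    | zero =>
      apply Set.Finite.subset (Bset_finite (a1 := a1) (a2 := a2))
      rintro p ⟨hp, hge⟩
      rcases struct h1 h2 hp with hb | ⟨r, hr, hlt, -⟩
      · exact hb
      · have := mu_le a1 a2 h1 h2 (mem_gamma h1 h2 hr)
        omega
    | succ k ih =>
      apply Set.Finite.subset (Set.Finite.union (Bset_finite (a1 := a1) (a2 := a2))
        (Set.Finite.biUnion ih (fun r hr => Set.Finite.union
          (shiftX_fin a1 a2 h1 h2 (mem_gamma h1 h2 hr.1).1)
          (shiftY_fin a1 a2 h1 h2 (mem_gamma h1 h2 hr.1).2.1))))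
      rintro p ⟨hp, hge⟩
      rcases struct h1 h2 hp with hb | ⟨r, hr, hlt, hgam, hstep⟩
      · exact Or.inl hb
      · refine Or.inr (Set.mem_biUnion (⟨hr, by omega⟩ :
          r ∈ {p : ℝ × ℝ | LambdaMem a1 a2 p ∧ N ≤ mu a1 a2 p + k}) ?_)
        rcases hstep with ⟨m, hm⟩ | ⟨n, hn⟩
        · exact Or.inl ⟨hgam, m, hm⟩
        · exact Or.inr ⟨hgam, n, hn⟩
  have hsub : LambdaSet a1 a2 ⊆ {p : ℝ × ℝ | LambdaMem a1 a2 p ∧ N ≤ mu a1 a2 p + N} :=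
    fun p hp => ⟨hp, Nat.le_add_left _ _⟩
  exact (key N).subset hsub

end LZfin


open Topology Filter

/-- The set `Λ₀ = 2π { (2p,2q) + ∑ⱼ nⱼ (aⱼ,bⱼ) : p,q ∈ ℕ∪{0}, nⱼ ∈ {0,1},
(aⱼ,bⱼ) ∈ Λ_{α_{1,j},α_{2,j}} }`. -/
def LambdaZero (m : ℕ) (a1 a2 : Fin m → ℝ) : Set (ℝ × ℝ) :=
  {z | ∃ (p q : ℕ) (n : Fin m → ℕ) (ab : Fin m → ℝ × ℝ),
    (∀ j, n j = 0 ∨ n j = 1) ∧ (∀ j, ab j ∈ LambdaSet (a1 j) (a2 j)) ∧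
      z = (2 * Real.pi) • (((2 * p : ℝ), (2 * q : ℝ)) + ∑ j, (n j : ℝ) • ab j)}

/-- for nonnegative weights, `Λ₀` is a closed and discrete subset of `ℝ²`. -/
theorem LambdaZero_closed_discrete (m : ℕ) (a1 a2 : Fin m → ℝ)
    (h1 : ∀ j, 0 ≤ a1 j) (h2 : ∀ j, 0 ≤ a2 j) :
    IsClosed (LambdaZero m a1 a2) ∧ DiscreteTopology (LambdaZero m a1 a2) := by
  set S := LambdaZero m a1 a2 with hS
  set F : Set (ℝ × ℝ) := (fun f : Fin m → ℝ × ℝ => ∑ j, f j) ''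
    (Set.pi Set.univ fun j => insert ((0:ℝ), (0:ℝ)) (LambdaSet (a1 j) (a2 j))) with hF
  have hFfin : F.Finite :=
    (Set.Finite.pi fun j => (LZfin.lambdaSet_finite (h1 j) (h2 j)).insert _).image _
  have hFnonneg : ∀ s ∈ F, 0 ≤ s.1 ∧ 0 ≤ s.2 := by
    rintro s ⟨f, hf, rfl⟩
    have hco : ∀ j, 0 ≤ (f j).1 ∧ 0 ≤ (f j).2 := by
      intro j
      rcases hf j (Set.mem_univ j) with h | h
      · rw [h]; exact ⟨le_refl 0, le_refl 0⟩
      · have := LZfin.mem_gamma (h1 j) (h2 j) h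
        exact ⟨this.1, this.2.1⟩
    constructor
    · rw [Prod.fst_sum]; exact Finset.sum_nonneg fun j _ => (hco j).1
    · rw [Prod.snd_sum]; exact Finset.sum_nonneg fun j _ => (hco j).2
  have hcover : ∀ z ∈ S, ∃ (p q : ℕ) (s : ℝ × ℝ), s ∈ F ∧
      z = (2 * Real.pi) • (((2 * p : ℝ), (2 * q : ℝ)) + s) := by
    rintro z ⟨p, q, n, ab, hn, hab, hz⟩
    refine ⟨p, q, ∑ j, (n j : ℝ) • ab j, ⟨fun j => (n j : ℝ) • ab j, ?_, rfl⟩, hz⟩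
    intro j _
    rcases hn j with h | h
    · simp [h, Prod.mk_zero_zero]
    · simp only [h, Nat.cast_one, one_smul]
      exact Set.mem_insert_of_mem _ (hab j)
  -- local finiteness
  have hloc : ∀ R : ℝ, (S ∩ Metric.closedBall 0 R).Finite := by
    intro R
    set K : ℕ := ⌊R⌋₊ + 1 with hK
    set g : (ℕ × ℕ) × (ℝ × ℝ) → ℝ × ℝ :=
      fun x => (2 * Real.pi) • (((2 * x.1.1 : ℝ), (2 * x.1.2 : ℝ)) + x.2) with hg
    apply Set.Finite.subset (Set.Finite.image g
      (Set.Finite.prod (Set.Finite.prod (Finset.range K).finite_toSet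
        (Finset.range K).finite_toSet) hFfin))
    rintro z ⟨hzS, hzB⟩
    obtain ⟨p, q, s, hsF, hz⟩ := hcover z hzS
    have hnorm : ‖z‖ ≤ R := mem_closedBall_zero_iff.mp hzB
    have hpi : (3:ℝ) < Real.pi := Real.pi_gt_three
    have hs := hFnonneg s hsF
    have hz1 : z.1 = 2 * Real.pi * (2 * p + s.1) := by
      rw [hz]; simp [smul_eq_mul]; ring
    have hz2 : z.2 = 2 * Real.pi * (2 * q + s.2) := by
      rw [hz]; simp [smul_eq_mul]; ring
    have hz1le : z.1 ≤ R := le_trans (le_trans (le_abs_self _) (norm_fst_le z)) hnorm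
    have hz2le : z.2 ≤ R := le_trans (le_trans (le_abs_self _) (norm_snd_le z)) hnorm
    have hpR : (p : ℝ) ≤ R := by nlinarith [Nat.cast_nonneg (α := ℝ) p, hs.1]
    have hqR : (q : ℝ) ≤ R := by nlinarith [Nat.cast_nonneg (α := ℝ) q, hs.2]
    refine ⟨((p, q), s), ⟨⟨?_, ?_⟩, hsF⟩, hz.symm⟩
    · exact Finset.mem_coe.mpr (Finset.mem_range.mpr (Nat.lt_succ_of_le (Nat.le_floor hpR)))
    · exact Finset.mem_coe.mpr (Finset.mem_range.mpr (Nat.lt_succ_of_le (Nat.le_floor hqR)))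
  -- conclude
  rw [← isDiscrete_iff_discreteTopology, isClosed_and_discrete_iff]
  intro x
  rw [Filter.disjoint_principal_right]
  set T := (S ∩ Metric.closedBall 0 (‖x‖ + 1)) \ {x} with hT
  have hTfin : T.Finite := (hloc _).diff
  have hxT : x ∉ T := fun h => h.2 rfl
  have hUmem : Tᶜ ∩ Metric.ball x 1 ∈ 𝓝 x :=
    IsOpen.mem_nhds (hTfin.isClosed.isOpen_compl.inter Metric.isOpen_ball)
      ⟨hxT, Metric.mem_ball_self one_pos⟩
  have hsub : (Tᶜ ∩ Metric.ball x 1) ∩ {x}ᶜ ⊆ Sᶜ := by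
    rintro z ⟨⟨hzT, hzb⟩, hzx⟩ hzS
    apply hzT
    refine ⟨⟨hzS, ?_⟩, hzx⟩
    rw [Metric.mem_closedBall]
    have hd : dist z x < 1 := Metric.mem_ball.mp hzb
    calc dist z 0 ≤ dist z x + dist x 0 := dist_triangle _ _ _
      _ ≤ 1 + ‖x‖ := by rw [dist_zero_right]; linarith
      _ = ‖x‖ + 1 := by ring
  exact Filter.mem_of_superset
    (Filter.inter_mem (mem_nhdsWithin_of_mem_nhds hUmem) self_mem_nhdsWithin) hsub
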